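/- Let K ≥ 1 be a natural number and let x, y be real numbers with 0 ≤ y ≤ x ≤ 1/K. Then (1 − y)^K − (1 − x)^K ≥ (K / e) · (x − y), where e = exp 1. -/

import Mathlib

lemma pow_sub_pow_ge (K : ℕ) {a b : ℝ} (hb : 0 ≤ b) (hab : b ≤ a) :
    (K : ℝ) * b ^ (K - 1) * (a - b) ≤ a ^ K - b ^ K := by
  induction K with
  | zero => simp
  | succ n ih =>
    rcases Nat.eq_zero_or_pos n with hn | hn
    · subst hn; simp
    have hbn : (0:ℝ) ≤ b ^ n := pow_nonneg hb n
    have h1 : (n : ℝ) * b ^ (n - 1) * (a - b) ≤ a ^ n - b ^ n := ih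
    have hbn1 : b ^ (n - 1) * b = b ^ n := by
      rw [← pow_succ]; congr 1; omega
    have ha : 0 ≤ a := le_trans hb hab
    have key : a * (a ^ n - b ^ n) + (a - b) * b ^ n = a ^ (n+1) - b ^ (n+1) := by
      ring
    have h2 : a * ((n : ℝ) * b ^ (n - 1) * (a - b)) ≤ a * (a ^ n - b ^ n) :=
      mul_le_mul_of_nonneg_left h1 ha
    have h3 : b * ((n : ℝ) * b ^ (n - 1) * (a - b)) ≤ a * ((n : ℝ) * b ^ (n - 1) * (a - b)) := by
      apply mul_le_mul_of_nonneg_right hab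
      have hab' : (0:ℝ) ≤ a - b := by linarith
      have := pow_nonneg hb (n-1)
      positivity
    have h4 : b * ((n : ℝ) * b ^ (n - 1) * (a - b)) = (n : ℝ) * b ^ n * (a - b) := by
      rw [← hbn1]; ring
    simp only [Nat.add_sub_cancel]
    push_cast
    nlinarith [h2, h3, h4, key]

/-- For `K ≥ 1` and `0 ≤ y ≤ x ≤ 1/K`,
`(1 − y)^K − (1 − x)^K ≥ (K/e)·(x − y)`. -/
theorem bestOfK_lower_lipschitz (K : ℕ) (hK : 1 ≤ K) (x y : ℝ)
    (hy : 0 ≤ y) (hxy : y ≤ x) (hx : x ≤ 1 / (K : ℝ)) :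
    ((K : ℝ) / Real.exp 1) * (x - y) ≤ (1 - y) ^ K - (1 - x) ^ K := by
  have hKpos : (0:ℝ) < K := by exact_mod_cast hK
  have hb0 : (0:ℝ) ≤ 1 - x := by
    have : x ≤ 1 := le_trans hx (by rw [div_le_one hKpos]; exact_mod_cast hK)
    linarith
  have hab : 1 - x ≤ 1 - y := by linarith
  have main := pow_sub_pow_ge K hb0 hab
  -- show (1-x)^(K-1) ≥ exp(-1)
  have hstep : Real.exp (-1) ≤ (1 - x) ^ (K - 1) := by
    rcases Nat.eq_or_lt_of_le hK with h1 | h2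
    · rw [← h1]; simpa using (Real.exp_le_one_iff.mpr (by norm_num)).trans (le_refl 1) |>.trans_eq rfl
    · have hK2 : 2 ≤ K := h2
      have hKpos' : (0:ℝ) < K := by positivity
      have hKm1 : (0:ℝ) < (K:ℝ) - 1 := by
        have : (2:ℝ) ≤ K := by exact_mod_cast hK2
        linarith
      have hexp : Real.exp (-(1 / ((K:ℝ) - 1))) ≤ 1 - 1 / K := by
        have h := Real.add_one_le_exp (1 / ((K:ℝ) - 1))
        have hepos : 0 < Real.exp (1 / ((K:ℝ) - 1)) := Real.exp_pos _
        rw [Real.exp_neg]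
        rw [inv_le_comm₀ hepos (by rw [sub_pos, div_lt_one hKpos']; exact_mod_cast h2 : (0:ℝ) < 1 - 1/K)] 
        · calc (1 - 1/(K:ℝ))⁻¹ = (K:ℝ)/((K:ℝ)-1) := by
                field_simp
              _ = 1/((K:ℝ)-1) + 1 := by field_simp; ring
              _ ≤ Real.exp (1 / ((K:ℝ) - 1)) := h
      have hxb : 1 - 1/(K:ℝ) ≤ 1 - x := by linarith
      have h3 : Real.exp (-(1 / ((K:ℝ) - 1))) ^ (K - 1) ≤ (1 - x) ^ (K - 1) :=
        pow_le_pow_left₀ (Real.exp_pos _).le (hexp.trans hxb) _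
      calc Real.exp (-1) = Real.exp (-(1 / ((K:ℝ) - 1)) * (K - 1 : ℕ)) := by
            congr 1
            have : ((K - 1 : ℕ) : ℝ) = (K:ℝ) - 1 := by
              push_cast [Nat.cast_sub hK]; ring
            rw [this]; field_simp
        _ = Real.exp (-(1 / ((K:ℝ) - 1))) ^ (K - 1) := by
            rw [← Real.exp_nat_mul]; ring_nf
        _ ≤ (1 - x) ^ (K - 1) := h3
  have hxy' : 0 ≤ x - y := by linarith
  have h5 : ((K:ℝ) / Real.exp 1) * (x - y) ≤ (K:ℝ) * (1 - x) ^ (K - 1) * (x - y) := by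
    apply mul_le_mul_of_nonneg_right _ hxy'
    rw [div_eq_mul_inv, ← Real.exp_neg]
    exact mul_le_mul_of_nonneg_left hstep hKpos.le
  calc ((K:ℝ) / Real.exp 1) * (x - y) ≤ (K:ℝ) * (1 - x) ^ (K - 1) * (x - y) := h5
    _ = (K:ℝ) * (1 - x) ^ (K - 1) * ((1 - y) - (1 - x)) := by ring_nf
    _ ≤ (1 - y) ^ K - (1 - x) ^ K := main
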